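/- Let 𝒜 be a finite nonempty set, μ a translation invariant probability measure on 𝒜^ℤ, and m ≥ 1 an integer. For 1 ≤ k ≤ m set G_k = 2^k ℤ and G_k^− = {j · 2^k : j ∈ ℤ, j < 0}. Then the entropy density s_μ = lim_{n→∞} S({0, …, n−1})/n exists and admits the hierarchical decomposition s_μ = (1/2^m) · S( {0} | G_m^− ) + Σ_{k=1}^m (1/2^k) · S( {2^{k−1}} | ({2^{k−1}} + G_k^−) ∪ G_k ), where conditional entropies with infinite conditioning sets are the limits over growing finite windows. -/

import Mathlib

open MeasureTheory Real Filter Pointwise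

/-- Probability of the cylinder set determined by the configuration `x` on the finite
set `Λ ⊆ ℤ`. -/
noncomputable def cylProb1 {𝒜 : Type*} [MeasurableSpace 𝒜]
    (μ : Measure (ℤ → 𝒜)) (Λ : Finset ℤ) (x : Λ → 𝒜) : ℝ :=
  (μ {ω | ∀ v : Λ, ω v.1 = x v}).toReal

/-- The entropy `S(Λ)` of a finite set of sites `Λ ⊆ ℤ` with respect to `μ`. -/
noncomputable def entS1 {𝒜 : Type*} [Fintype 𝒜] [MeasurableSpace 𝒜]
    (μ : Measure (ℤ → 𝒜)) (Λ : Finset ℤ) : ℝ :=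
  -∑ x : (Λ → 𝒜), cylProb1 μ Λ x * Real.log (cylProb1 μ Λ x)

/-- The conditional entropy `S(Λ | Λ')` (terms with zero probability vanish since
`Real.log 0 = 0` and `0 * log 0 = 0`). -/
noncomputable def condEnt1 {𝒜 : Type*} [Fintype 𝒜] [MeasurableSpace 𝒜]
    (μ : Measure (ℤ → 𝒜)) (Λ Λ' : Finset ℤ) : ℝ :=
  -∑ x : ((Λ ∪ Λ' : Finset ℤ) → 𝒜),
      cylProb1 μ (Λ ∪ Λ') x *
        Real.log (cylProb1 μ (Λ ∪ Λ') x /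
          cylProb1 μ Λ' (fun v => x ⟨v.1, Finset.mem_union_right Λ v.2⟩))

/-- `μ` is translation invariant: it is preserved by the shift `σ`, `(σx)(i) = x(i+1)`. -/
def TransInv1 {𝒜 : Type*} [MeasurableSpace 𝒜] (μ : Measure (ℤ → 𝒜)) : Prop :=
  μ.map (fun ω (i : ℤ) => ω (i + 1)) = μ

open Classical in
/-- The finite set `Λ' ∩ [-n, n]` for a (possibly infinite) `Λ' ⊆ ℤ`. -/
noncomputable def interBox1 (Λ' : Set ℤ) (n : ℕ) : Finset ℤ :=
  (Finset.Icc (-(n : ℤ)) (n : ℤ)).filter (· ∈ Λ')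

section Part1
set_option linter.unusedSectionVars false

variable {𝒜 : Type*} [Fintype 𝒜] [MeasurableSpace 𝒜] [MeasurableSingletonClass 𝒜]
  (μ : MeasureTheory.Measure (ℤ → 𝒜)) [MeasureTheory.IsProbabilityMeasure μ]

/-- restriction of a configuration to a subset of sites -/
def resF {Λ' Λ'' : Finset ℤ} (h : Λ' ⊆ Λ'') (x : Λ'' → 𝒜) : Λ' → 𝒜 :=
  fun v => x ⟨v.1, h v.2⟩

lemma measurableSet_cyl (Λ : Finset ℤ) (x : Λ → 𝒜) :
    MeasurableSet {ω : ℤ → 𝒜 | ∀ v : Λ, ω v.1 = x v} := by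
  have : {ω : ℤ → 𝒜 | ∀ v : Λ, ω v.1 = x v}
      = ⋂ v : Λ, (fun ω : ℤ → 𝒜 => ω v.1) ⁻¹' {x v} := by
    ext ω; simp [Set.mem_iInter]
  rw [this]
  exact MeasurableSet.iInter fun v =>
    (measurable_pi_apply (v.1 : ℤ)) (MeasurableSet.singleton (x v))

lemma cylProb_nonneg (Λ : Finset ℤ) (x : Λ → 𝒜) : 0 ≤ cylProb1 μ Λ x :=
  ENNReal.toReal_nonneg

lemma cylProb_le_one (Λ : Finset ℤ) (x : Λ → 𝒜) : cylProb1 μ Λ x ≤ 1 := by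
  have := MeasureTheory.prob_le_one (μ := μ)
    (s := {ω : ℤ → 𝒜 | ∀ v : Λ, ω v.1 = x v})
  simpa [cylProb1] using ENNReal.toReal_le_of_le_ofReal zero_le_one (by simpa using this)

open Classical in
lemma cylProb_marginal {Λ' Λ'' : Finset ℤ} (h : Λ' ⊆ Λ'') (x' : Λ' → 𝒜) :
    cylProb1 μ Λ' x'
      = ∑ x ∈ Finset.univ.filter (fun x : Λ'' → 𝒜 => resF h x = x'),
          cylProb1 μ Λ'' x := by
  classical
  have hset : {ω : ℤ → 𝒜 | ∀ v : Λ', ω v.1 = x' v}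
      = ⋃ x ∈ Finset.univ.filter (fun x : Λ'' → 𝒜 => resF h x = x'),
          {ω : ℤ → 𝒜 | ∀ v : Λ'', ω v.1 = x v} := by
    ext ω
    simp only [Set.mem_setOf_eq, Set.mem_iUnion, Finset.mem_filter, Finset.mem_univ, true_and]
    constructor
    · intro hω
      refine ⟨fun v => ω v.1, funext fun v => ?_, fun v => rfl⟩
      exact hω v
    · rintro ⟨x, hx, hω⟩ v
      have := hω ⟨v.1, h v.2⟩
      rw [this, ← hx]; rfl
  have hdisj : Set.PairwiseDisjoint
      (↑(Finset.univ.filter (fun x : Λ'' → 𝒜 => resF h x = x')))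
      (fun x : Λ'' → 𝒜 => {ω : ℤ → 𝒜 | ∀ v : Λ'', ω v.1 = x v}) := by
    intro a _ b _ hab
    refine Set.disjoint_left.2 fun ω hωa hωb => hab ?_
    exact funext fun v => (hωa v).symm.trans (hωb v)
  have := MeasureTheory.measure_biUnion_finset (μ := μ) hdisj
    (fun x _ => measurableSet_cyl Λ'' x)
  rw [cylProb1, hset, this, ENNReal.toReal_sum]
  · rfl
  · intro a _; exact MeasureTheory.measure_ne_top μ _

lemma sum_cylProb (Λ : Finset ℤ) : ∑ x : Λ → 𝒜, cylProb1 μ Λ x = 1 := by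
  classical
  have hempty : (∅ : Finset ℤ) ⊆ Λ := Finset.empty_subset Λ
  have x0 : ((∅ : Finset ℤ) : Finset ℤ) → 𝒜 := fun v => (Finset.notMem_empty _ v.2).elim
  have h1 : cylProb1 μ (∅ : Finset ℤ) x0 = 1 := by
    have : {ω : ℤ → 𝒜 | ∀ v : ((∅ : Finset ℤ) : Finset ℤ), ω v.1 = x0 v} = Set.univ := by
      ext ω; simp only [Set.mem_setOf_eq, Set.mem_univ, iff_true]
      exact fun v => (Finset.notMem_empty _ v.2).elim
    simp [cylProb1, this]
  have h2 := cylProb_marginal μ hempty x0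
  rw [h1] at h2
  have hfil : Finset.univ.filter (fun x : Λ → 𝒜 => resF hempty x = x0) = Finset.univ := by
    apply Finset.filter_true_of_mem
    intro x _
    funext v
    exact (Finset.notMem_empty _ v.2).elim
  rw [hfil] at h2
  exact h2.symm

lemma cylProb_le_marginal {Λ' Λ'' : Finset ℤ} (h : Λ' ⊆ Λ'') (x : Λ'' → 𝒜) :
    cylProb1 μ Λ'' x ≤ cylProb1 μ Λ' (resF h x) := by
  classical
  rw [cylProb_marginal μ h]
  exact Finset.single_le_sum (fun y _ => cylProb_nonneg μ Λ'' y)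
    (Finset.mem_filter.2 ⟨Finset.mem_univ x, rfl⟩)

lemma sum_marginal {Λ' Λ'' : Finset ℤ} (h : Λ' ⊆ Λ'') (g : (Λ' → 𝒜) → ℝ) :
    ∑ x : Λ'' → 𝒜, cylProb1 μ Λ'' x * g (resF h x)
      = ∑ x' : Λ' → 𝒜, cylProb1 μ Λ' x' * g x' := by
  classical
  rw [← Finset.sum_fiberwise Finset.univ (resF h)
    (fun x => cylProb1 μ Λ'' x * g (resF h x))]
  refine Finset.sum_congr rfl fun x' _ => ?_
  rw [cylProb_marginal μ h x', Finset.sum_mul]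
  refine Finset.sum_congr rfl fun x hx => ?_
  rw [(Finset.mem_filter.1 hx).2]

end Part1


section Part2
set_option linter.unusedSectionVars false

variable {𝒜 : Type*} [Fintype 𝒜] [MeasurableSpace 𝒜] [MeasurableSingletonClass 𝒜]
  (μ : MeasureTheory.Measure (ℤ → 𝒜)) [MeasureTheory.IsProbabilityMeasure μ]

lemma condEnt_eq (Λ Λ' : Finset ℤ) :
    condEnt1 μ Λ Λ' = entS1 μ (Λ ∪ Λ') - entS1 μ Λ' := by
  classical
  have hsub : Λ' ⊆ Λ ∪ Λ' := Finset.subset_union_right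
  have hres : ∀ x : ((Λ ∪ Λ' : Finset ℤ) → 𝒜),
      (fun v : Λ' => x ⟨v.1, Finset.mem_union_right Λ v.2⟩) = resF hsub x := fun _ => rfl
  have key : ∀ x : ((Λ ∪ Λ' : Finset ℤ) → 𝒜),
      cylProb1 μ (Λ ∪ Λ') x *
          Real.log (cylProb1 μ (Λ ∪ Λ') x / cylProb1 μ Λ' (resF hsub x))
        = cylProb1 μ (Λ ∪ Λ') x * Real.log (cylProb1 μ (Λ ∪ Λ') x)
          - cylProb1 μ (Λ ∪ Λ') x * Real.log (cylProb1 μ Λ' (resF hsub x)) := by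
    intro x
    by_cases hp : cylProb1 μ (Λ ∪ Λ') x = 0
    · simp [hp]
    · have hq : cylProb1 μ Λ' (resF hsub x) ≠ 0 := by
        intro h0
        exact hp (le_antisymm (h0 ▸ cylProb_le_marginal μ hsub x) (cylProb_nonneg μ _ x))
      rw [Real.log_div hp hq]; ring
  have : condEnt1 μ Λ Λ'
      = -∑ x : ((Λ ∪ Λ' : Finset ℤ) → 𝒜),
          (cylProb1 μ (Λ ∪ Λ') x * Real.log (cylProb1 μ (Λ ∪ Λ') x)
            - cylProb1 μ (Λ ∪ Λ') x * Real.log (cylProb1 μ Λ' (resF hsub x))) := by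
    rw [condEnt1]
    congr 1
    exact Finset.sum_congr rfl fun x _ => by rw [hres x, key x]
  rw [this, Finset.sum_sub_distrib,
    sum_marginal μ hsub (fun x' => Real.log (cylProb1 μ Λ' x'))]
  rw [entS1, entS1]
  ring

lemma entS_nonneg (Λ : Finset ℤ) : 0 ≤ entS1 μ Λ := by
  rw [entS1, neg_nonneg]
  refine Finset.sum_nonpos fun x _ => ?_
  rcases eq_or_lt_of_le (cylProb_nonneg μ Λ x) with h | h
  · simp [← h]
  · exact mul_nonpos_of_nonneg_of_nonpos h.le
      (Real.log_nonpos (cylProb_nonneg μ Λ x) (cylProb_le_one μ Λ x))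

lemma condEnt_nonneg (Λ Λ' : Finset ℤ) : 0 ≤ condEnt1 μ Λ Λ' := by
  classical
  have hsub : Λ' ⊆ Λ ∪ Λ' := Finset.subset_union_right
  rw [condEnt1, neg_nonneg]
  refine Finset.sum_nonpos fun x _ => ?_
  rcases eq_or_lt_of_le (cylProb_nonneg μ (Λ ∪ Λ') x) with h | h
  · simp [← h]
  · refine mul_nonpos_of_nonneg_of_nonpos h.le (Real.log_nonpos ?_ ?_)
    · exact div_nonneg h.le (cylProb_nonneg μ _ _)
    · have h1 : cylProb1 μ (Λ ∪ Λ') x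
          ≤ cylProb1 μ Λ' (fun v => x ⟨v.1, Finset.mem_union_right Λ v.2⟩) :=
        cylProb_le_marginal μ hsub x
      have h2 : (0:ℝ) < cylProb1 μ Λ' (fun v => x ⟨v.1, Finset.mem_union_right Λ v.2⟩) :=
        lt_of_lt_of_le h h1
      exact div_le_one_of_le₀ h1 h2.le

lemma entS_mono {Λ' Λ'' : Finset ℤ} (h : Λ' ⊆ Λ'') : entS1 μ Λ' ≤ entS1 μ Λ'' := by
  have := condEnt_nonneg μ Λ'' Λ'
  rw [condEnt_eq, Finset.union_eq_left.2 h] at this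
  linarith

lemma entS_empty : entS1 μ (∅ : Finset ℤ) = 0 := by
  classical
  rw [entS1]
  have h1 : ∀ x : ((∅ : Finset ℤ) : Finset ℤ) → 𝒜, cylProb1 μ ∅ x = 1 := by
    intro x
    have : {ω : ℤ → 𝒜 | ∀ v : ((∅ : Finset ℤ) : Finset ℤ), ω v.1 = x v} = Set.univ := by
      ext ω; simp only [Set.mem_setOf_eq, Set.mem_univ, iff_true]
      exact fun v => (Finset.notMem_empty _ v.2).elim
    simp [cylProb1, this]
  simp [h1]

lemma gibbs {ι : Type*} [Fintype ι] (p q : ι → ℝ) (hp : ∀ i, 0 ≤ p i)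
    (hq : ∀ i, 0 ≤ q i) (h0 : ∀ i, q i = 0 → p i = 0)
    (hsum : ∑ i, q i ≤ ∑ i, p i) :
    ∑ i, p i * Real.log (q i / p i) ≤ 0 := by
  have step : ∀ i, p i * Real.log (q i / p i) ≤ q i - p i := by
    intro i
    rcases eq_or_lt_of_le (hp i) with h | h
    · simp [← h, hq i]
    · have hqi : 0 < q i := by
        rcases eq_or_lt_of_le (hq i) with h' | h'
        · exact absurd (h0 i h'.symm) (ne_of_gt h)
        · exact h'
      have hlog : Real.log (q i / p i) ≤ q i / p i - 1 :=
        Real.log_le_sub_one_of_pos (div_pos hqi h)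
      have := mul_le_mul_of_nonneg_left hlog h.le
      calc p i * Real.log (q i / p i) ≤ p i * (q i / p i - 1) := this
        _ = q i - p i := by field_simp
  calc ∑ i, p i * Real.log (q i / p i) ≤ ∑ i, (q i - p i) := Finset.sum_le_sum fun i _ => step i
    _ = ∑ i, q i - ∑ i, p i := Finset.sum_sub_distrib _ _
    _ ≤ 0 := by linarith

lemma entS_single_le [Nonempty 𝒜] (t : ℤ) :
    entS1 μ {t} ≤ Real.log (Fintype.card 𝒜) := by
  classical
  set K : ℕ := Fintype.card 𝒜 with hK
  have hKpos : 0 < K := Fintype.card_pos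
  have hcard : (Fintype.card (({t} : Finset ℤ) → 𝒜) : ℝ) = K := by
    rw [Fintype.card_fun]
    simp
    exact hK.symm
  have hg := gibbs (fun x : ({t} : Finset ℤ) → 𝒜 => cylProb1 μ {t} x)
    (fun _ => (K : ℝ)⁻¹) (cylProb_nonneg μ {t}) (fun _ => by positivity)
    (fun x hx => absurd hx (by positivity))
    (by rw [Finset.sum_const, sum_cylProb μ {t}]
        simp only [Finset.card_univ, nsmul_eq_mul]
        rw [← hcard]
        rw [mul_inv_cancel₀ (by rw [hcard]; positivity)])
  have hKinv : ((K:ℝ)⁻¹) ≠ 0 := by positivity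
  have expand : ∀ x : ({t} : Finset ℤ) → 𝒜,
      cylProb1 μ {t} x * Real.log ((K : ℝ)⁻¹ / cylProb1 μ {t} x)
        = cylProb1 μ {t} x * (-Real.log K) - cylProb1 μ {t} x * Real.log (cylProb1 μ {t} x) := by
    intro x
    by_cases hp : cylProb1 μ {t} x = 0
    · simp [hp]
    · rw [Real.log_div hKinv hp, Real.log_inv]; ring
  rw [Finset.sum_congr rfl (fun x _ => expand x), Finset.sum_sub_distrib,
    ← Finset.sum_mul, sum_cylProb μ {t}] at hg
  rw [entS1]
  have : ∑ x : ({t} : Finset ℤ) → 𝒜,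
      cylProb1 μ {t} x * Real.log (cylProb1 μ {t} x) ≥ -Real.log K := by linarith
  linarith

end Part2

section Part3
set_option linter.unusedSectionVars false

variable {𝒜 : Type*} [Fintype 𝒜] [MeasurableSpace 𝒜] [MeasurableSingletonClass 𝒜]
  (μ : MeasureTheory.Measure (ℤ → 𝒜)) [MeasureTheory.IsProbabilityMeasure μ]

lemma entS_submod (A B : Finset ℤ) :
    entS1 μ (A ∪ B) + entS1 μ (A ∩ B) ≤ entS1 μ A + entS1 μ B := by
  classical
  have hA : A ⊆ A ∪ B := Finset.subset_union_left
  have hB : B ⊆ A ∪ B := Finset.subset_union_right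
  have hI : A ∩ B ⊆ A ∪ B := Finset.inter_subset_left.trans hA
  have hIA : A ∩ B ⊆ A := Finset.inter_subset_left
  have hIB : A ∩ B ⊆ B := Finset.inter_subset_right
  -- fiber sum identity
  have hfib : ∀ xA : A → 𝒜,
      ∑ x ∈ Finset.univ.filter (fun x : (A ∪ B : Finset ℤ) → 𝒜 => resF hA x = xA),
          cylProb1 μ B (resF hB x)
        = cylProb1 μ (A ∩ B) (resF hIA xA) := by
    intro xA
    rw [cylProb_marginal μ hIB (resF hIA xA)]
    refine Finset.sum_bij (fun x _ => resF hB x) ?_ ?_ ?_ ?_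
    · intro x hx
      have hxA := (Finset.mem_filter.1 hx).2
      refine Finset.mem_filter.2 ⟨Finset.mem_univ _, ?_⟩
      subst hxA; rfl
    · intro x₁ h₁ x₂ h₂ heq
      funext u
      rcases Finset.mem_union.1 u.2 with hu | hu
      · have e1 : resF hA x₁ = resF hA x₂ := by
          rw [(Finset.mem_filter.1 h₁).2, (Finset.mem_filter.1 h₂).2]
        exact congrFun e1 ⟨u.1, hu⟩
      · exact congrFun heq ⟨u.1, hu⟩
    · intro xB hxB
      have hxB' := (Finset.mem_filter.1 hxB).2
      refine ⟨fun u => if h : u.1 ∈ A then xA ⟨u.1, h⟩ else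
        xB ⟨u.1, by
          rcases Finset.mem_union.1 u.2 with h' | h'
          · exact absurd h' h
          · exact h'⟩, Finset.mem_filter.2 ⟨Finset.mem_univ _, ?_⟩, ?_⟩
      · funext v
        show (if h : (v.1 : ℤ) ∈ A then xA ⟨v.1, h⟩ else _) = xA v
        rw [dif_pos v.2]
      · funext v
        by_cases hv : (v.1 : ℤ) ∈ A
        · show (if h : (v.1 : ℤ) ∈ A then xA ⟨v.1, h⟩ else _) = xB v
          rw [dif_pos hv]
          exact (congrFun hxB' ⟨v.1, Finset.mem_inter.2 ⟨hv, v.2⟩⟩).symm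
        · show (if h : (v.1 : ℤ) ∈ A then xA ⟨v.1, h⟩ else _) = xB v
          rw [dif_neg hv]
    · intro x _; rfl
  -- the q-sum is at most 1
  have hQ : ∑ x : (A ∪ B : Finset ℤ) → 𝒜,
      cylProb1 μ A (resF hA x) * cylProb1 μ B (resF hB x)
        / cylProb1 μ (A ∩ B) (resF hI x) ≤ 1 := by
    rw [← Finset.sum_fiberwise Finset.univ (resF hA)
      (fun x => cylProb1 μ A (resF hA x) * cylProb1 μ B (resF hB x)
        / cylProb1 μ (A ∩ B) (resF hI x))]
    have inner : ∀ xA : A → 𝒜,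
        (∑ x ∈ Finset.univ.filter (fun x : (A ∪ B : Finset ℤ) → 𝒜 => resF hA x = xA),
          cylProb1 μ A (resF hA x) * cylProb1 μ B (resF hB x)
            / cylProb1 μ (A ∩ B) (resF hI x))
        = cylProb1 μ A xA * cylProb1 μ (A ∩ B) (resF hIA xA)
            / cylProb1 μ (A ∩ B) (resF hIA xA) := by
      intro xA
      have step : ∀ x ∈ Finset.univ.filter
          (fun x : (A ∪ B : Finset ℤ) → 𝒜 => resF hA x = xA),
          cylProb1 μ A (resF hA x) * cylProb1 μ B (resF hB x)
            / cylProb1 μ (A ∩ B) (resF hI x)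
          = (cylProb1 μ A xA / cylProb1 μ (A ∩ B) (resF hIA xA))
              * cylProb1 μ B (resF hB x) := by
        intro x hx
        have hxA := (Finset.mem_filter.1 hx).2
        have hr : resF hI x = resF hIA xA := by rw [← hxA]; rfl
        rw [hxA, hr]; ring
      rw [Finset.sum_congr rfl step, ← Finset.mul_sum, hfib xA]
      ring
    rw [Finset.sum_congr rfl (fun xA _ => inner xA)]
    calc ∑ xA : A → 𝒜, cylProb1 μ A xA * cylProb1 μ (A ∩ B) (resF hIA xA)
            / cylProb1 μ (A ∩ B) (resF hIA xA)
        ≤ ∑ xA : A → 𝒜, cylProb1 μ A xA := by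
          refine Finset.sum_le_sum fun xA _ => ?_
          rcases eq_or_ne (cylProb1 μ (A ∩ B) (resF hIA xA)) 0 with h | h
          · simp [h]
            exact cylProb_nonneg μ A xA
          · rw [mul_div_assoc, div_self h, mul_one]
      _ = 1 := sum_cylProb μ A
  -- Gibbs
  have hgibbs := gibbs (fun x : (A ∪ B : Finset ℤ) → 𝒜 => cylProb1 μ (A ∪ B) x)
    (fun x => cylProb1 μ A (resF hA x) * cylProb1 μ B (resF hB x)
      / cylProb1 μ (A ∩ B) (resF hI x))
    (cylProb_nonneg μ _)
    (fun x => div_nonneg (mul_nonneg (cylProb_nonneg μ _ _) (cylProb_nonneg μ _ _))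
      (cylProb_nonneg μ _ _))
    (by
      intro x hq0
      rcases eq_or_ne (cylProb1 μ (A ∩ B) (resF hI x)) 0 with hr | hr
      · exact le_antisymm (hr ▸ cylProb_le_marginal μ hI x) (cylProb_nonneg μ _ x)
      · rcases (div_eq_zero_iff.1 hq0) with hab | hrr
        · rcases mul_eq_zero.1 hab with ha | hb
          · exact le_antisymm (ha ▸ cylProb_le_marginal μ hA x) (cylProb_nonneg μ _ x)
          · exact le_antisymm (hb ▸ cylProb_le_marginal μ hB x) (cylProb_nonneg μ _ x)
        · exact absurd hrr hr)
    (by rw [sum_cylProb μ (A ∪ B)]; exact hQ)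
  -- identify the Gibbs sum with entropies
  have termeq : ∀ x : (A ∪ B : Finset ℤ) → 𝒜,
      cylProb1 μ (A ∪ B) x *
        Real.log ((cylProb1 μ A (resF hA x) * cylProb1 μ B (resF hB x)
          / cylProb1 μ (A ∩ B) (resF hI x)) / cylProb1 μ (A ∪ B) x)
      = cylProb1 μ (A ∪ B) x * Real.log (cylProb1 μ A (resF hA x))
        + cylProb1 μ (A ∪ B) x * Real.log (cylProb1 μ B (resF hB x))
        - cylProb1 μ (A ∪ B) x * Real.log (cylProb1 μ (A ∩ B) (resF hI x))
        - cylProb1 μ (A ∪ B) x * Real.log (cylProb1 μ (A ∪ B) x) := by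
    intro x
    rcases eq_or_lt_of_le (cylProb_nonneg μ (A ∪ B) x) with hp | hp
    · simp [← hp]
    · have hpa : 0 < cylProb1 μ A (resF hA x) :=
        lt_of_lt_of_le hp (cylProb_le_marginal μ hA x)
      have hpb : 0 < cylProb1 μ B (resF hB x) :=
        lt_of_lt_of_le hp (cylProb_le_marginal μ hB x)
      have hpr : 0 < cylProb1 μ (A ∩ B) (resF hI x) :=
        lt_of_lt_of_le hp (cylProb_le_marginal μ hI x)
      rw [div_div, Real.log_div (by positivity) (by positivity),
        Real.log_mul (ne_of_gt hpa) (ne_of_gt hpb),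
        Real.log_mul (ne_of_gt hpr) (ne_of_gt hp)]
      ring
  rw [Finset.sum_congr rfl (fun x _ => termeq x)] at hgibbs
  have e1 : ∑ x : (A ∪ B : Finset ℤ) → 𝒜,
      cylProb1 μ (A ∪ B) x * Real.log (cylProb1 μ A (resF hA x)) = -entS1 μ A := by
    rw [sum_marginal μ hA (fun y => Real.log (cylProb1 μ A y)), entS1, neg_neg]
  have e2 : ∑ x : (A ∪ B : Finset ℤ) → 𝒜,
      cylProb1 μ (A ∪ B) x * Real.log (cylProb1 μ B (resF hB x)) = -entS1 μ B := by
    rw [sum_marginal μ hB (fun y => Real.log (cylProb1 μ B y)), entS1, neg_neg]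
  have e3 : ∑ x : (A ∪ B : Finset ℤ) → 𝒜,
      cylProb1 μ (A ∪ B) x * Real.log (cylProb1 μ (A ∩ B) (resF hI x))
        = -entS1 μ (A ∩ B) := by
    rw [sum_marginal μ hI (fun y => Real.log (cylProb1 μ (A ∩ B) y)), entS1, neg_neg]
  have e4 : ∑ x : (A ∪ B : Finset ℤ) → 𝒜,
      cylProb1 μ (A ∪ B) x * Real.log (cylProb1 μ (A ∪ B) x) = -entS1 μ (A ∪ B) := by
    rw [entS1, neg_neg]
  simp only [Finset.sum_sub_distrib, Finset.sum_add_distrib] at hgibbs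
  rw [e1, e2, e3, e4] at hgibbs
  linarith

end Part3

section Part4
set_option linter.unusedSectionVars false

variable {𝒜 : Type*} [Fintype 𝒜] [MeasurableSpace 𝒜] [MeasurableSingletonClass 𝒜]
  (μ : MeasureTheory.Measure (ℤ → 𝒜)) [MeasureTheory.IsProbabilityMeasure μ]

/-- the shift by `a` -/
def shT (𝒜 : Type*) (a : ℤ) : (ℤ → 𝒜) → (ℤ → 𝒜) := fun ω i => ω (i + a)

lemma measurable_shT (a : ℤ) : Measurable (shT 𝒜 a) :=
  measurable_pi_lambda _ fun i => measurable_pi_apply _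

lemma shT_comp (a b : ℤ) : shT 𝒜 a ∘ shT 𝒜 b = shT 𝒜 (a + b) := by
  funext ω i
  show ω (i + a + b) = ω (i + (a + b))
  rw [add_assoc]

lemma map_shT (hinv : TransInv1 μ) : ∀ a : ℤ, μ.map (shT 𝒜 a) = μ := by
  have h1 : μ.map (shT 𝒜 1) = μ := hinv
  intro a
  induction a using Int.induction_on with
  | zero =>
    have : shT 𝒜 0 = id := by funext ω i; show ω (i + 0) = ω i; rw [add_zero]
    rw [this, MeasureTheory.Measure.map_id]
  | succ n ih =>
    have : ((μ.map (shT 𝒜 n)).map (shT 𝒜 1)) = μ.map (shT 𝒜 ((n : ℤ) + 1)) := by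
      rw [MeasureTheory.Measure.map_map (measurable_shT 1) (measurable_shT n), shT_comp]
      rw [add_comm]
    rw [← this, ih, h1]
  | pred n ih =>
    have : ((μ.map (shT 𝒜 1)).map (shT 𝒜 (-(n : ℤ) - 1))) = μ.map (shT 𝒜 (-(n : ℤ))) := by
      rw [MeasureTheory.Measure.map_map (measurable_shT _) (measurable_shT 1), shT_comp]
      congr 1
      ring
    rw [h1, ih] at this
    have h2 : μ.map (shT 𝒜 (-(n : ℤ) - 1)) = μ := this
    exact h2

lemma entS_image (hinv : TransInv1 μ) (a : ℤ) (Λ : Finset ℤ) :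
    entS1 μ (Λ.image (· + a)) = entS1 μ Λ := by
  classical
  set Λ' := Λ.image (· + a) with hΛ'
  have hmem : ∀ w : Λ, w.1 + a ∈ Λ' := fun w => Finset.mem_image_of_mem _ w.2
  have hmem' : ∀ v : Λ', v.1 - a ∈ Λ := by
    intro v
    obtain ⟨w, hw, hwv⟩ := Finset.mem_image.1 v.2
    have : v.1 - a = w := by omega
    rw [this]; exact hw
  -- the equivalence between sites
  let e₀ : (Λ : Finset ℤ) ≃ (Λ' : Finset ℤ) :=
    { toFun := fun w => ⟨w.1 + a, hmem w⟩
      invFun := fun v => ⟨v.1 - a, hmem' v⟩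
      left_inv := fun w => Subtype.ext (by simp)
      right_inv := fun v => Subtype.ext (by simp) }
  -- cylinder probability identity
  have hcyl : ∀ x : Λ' → 𝒜, cylProb1 μ Λ' x = cylProb1 μ Λ (fun w => x (e₀ w)) := by
    intro x
    have hset : (shT 𝒜 (-a)) ⁻¹' {ω : ℤ → 𝒜 | ∀ v : Λ', ω v.1 = x v}
        = {ω : ℤ → 𝒜 | ∀ w : Λ, ω w.1 = x (e₀ w)} := by
      ext ω
      simp only [Set.mem_preimage, Set.mem_setOf_eq]
      constructor
      · intro hω w
        have := hω (e₀ w)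
        show ω w.1 = x (e₀ w)
        have harg : w.1 + a + -a = w.1 := by ring
        rw [← harg]
        exact this
      · intro hω v
        show ω (v.1 + -a) = x v
        obtain ⟨w, hw, hwv⟩ := Finset.mem_image.1 v.2
        have harg : v.1 + -a = w := by omega
        rw [harg]
        have := hω ⟨w, hw⟩
        rw [this]
        congr 1
        exact Subtype.ext (by simp [e₀]; omega)
    have hmap : μ.map (shT 𝒜 (-a)) {ω : ℤ → 𝒜 | ∀ v : Λ', ω v.1 = x v}
        = μ {ω : ℤ → 𝒜 | ∀ w : Λ, ω w.1 = x (e₀ w)} := by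
      rw [MeasureTheory.Measure.map_apply (measurable_shT _) (measurableSet_cyl Λ' x), hset]
    rw [cylProb1, cylProb1, ← hmap, map_shT μ hinv]
  -- reindex the sum
  rw [entS1, entS1]
  congr 1
  let E : ({ x // x ∈ Λ' } → 𝒜) ≃ ({ x // x ∈ Λ } → 𝒜) :=
    (Equiv.arrowCongr e₀ (Equiv.refl 𝒜)).symm
  rw [← Equiv.sum_comp E.symm
    (fun x : { x // x ∈ Λ' } → 𝒜 => cylProb1 μ Λ' x * Real.log (cylProb1 μ Λ' x))]
  refine Finset.sum_congr rfl fun y _ => ?_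
  rw [hcyl (E.symm y)]
  have : (fun w => (E.symm y) (e₀ w)) = y := by
    funext w
    simp [E, Equiv.arrowCongr]
  rw [this]

lemma condEnt_image (hinv : TransInv1 μ) (a : ℤ) (Λ Λ' : Finset ℤ) :
    condEnt1 μ (Λ.image (· + a)) (Λ'.image (· + a)) = condEnt1 μ Λ Λ' := by
  classical
  rw [condEnt_eq, condEnt_eq, ← Finset.image_union, entS_image μ hinv, entS_image μ hinv]

end Part4

section Part5
set_option linter.unusedSectionVars false

variable {𝒜 : Type*} [Fintype 𝒜] [MeasurableSpace 𝒜] [MeasurableSingletonClass 𝒜]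
  (μ : MeasureTheory.Measure (ℤ → 𝒜)) [MeasureTheory.IsProbabilityMeasure μ]

lemma entS_union_le (A B : Finset ℤ) : entS1 μ (A ∪ B) ≤ entS1 μ A + entS1 μ B := by
  have h1 := entS_submod μ A B
  have h2 := entS_nonneg μ (A ∩ B)
  linarith

lemma condEnt_anti {A B B' : Finset ℤ} (hBB : B ⊆ B') (hAB' : ∀ v ∈ A, v ∉ B') :
    condEnt1 μ A B' ≤ condEnt1 μ A B := by
  classical
  have hsub := entS_submod μ (A ∪ B) B'
  have h1 : (A ∪ B) ∪ B' = A ∪ B' := by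
    rw [Finset.union_assoc, Finset.union_eq_right.2 hBB]
  have h2 : (A ∪ B) ∩ B' = B := by
    ext v
    simp only [Finset.mem_inter, Finset.mem_union]
    constructor
    · rintro ⟨hv1 | hv1, hv2⟩
      · exact absurd hv2 (hAB' v hv1)
      · exact hv1
    · intro hv
      exact ⟨Or.inr hv, hBB hv⟩
  rw [h1, h2] at hsub
  rw [condEnt_eq, condEnt_eq]
  linarith

lemma condEnt_le_entS (A B : Finset ℤ) : condEnt1 μ A B ≤ entS1 μ A := by
  have h1 := entS_union_le μ A B
  rw [condEnt_eq]
  linarith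

lemma condEnt_le_log [Nonempty 𝒜] (t : ℤ) (B : Finset ℤ) :
    condEnt1 μ {t} B ≤ Real.log (Fintype.card 𝒜) :=
  le_trans (condEnt_le_entS μ {t} B) (entS_single_le μ t)

/-- telescoping chain rule -/
lemma telescope (C : Finset ℤ) (t : ℕ → ℤ) (J : ℕ) :
    entS1 μ (C ∪ (Finset.range J).image t)
      = entS1 μ C + ∑ j ∈ Finset.range J, condEnt1 μ {t j} (C ∪ (Finset.range j).image t) := by
  classical
  induction J with
  | zero => simp
  | succ J ih =>
    have hset : C ∪ (Finset.range (J+1)).image t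
        = {t J} ∪ (C ∪ (Finset.range J).image t) := by
      rw [Finset.range_add_one, Finset.image_insert, Finset.union_insert, Finset.insert_eq]
    rw [hset, Finset.sum_range_succ, condEnt_eq, ih]
    ring

end Part5

section Part6
set_option linter.unusedSectionVars false

/-- sites in `[0, 2^m M)` divisible by `2^k` -/
def Dk (m M k : ℕ) : Finset ℤ :=
  (Finset.range (2^(m-k)*M)).image (fun i : ℕ => (i:ℤ) * 2^k)

lemma Dk_zero (m M : ℕ) : Finset.Ico (0:ℤ) ((2^m*M : ℕ) : ℤ) = Dk m M 0 := by
  ext x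
  simp only [Dk, Nat.sub_zero, Finset.mem_Ico, Finset.mem_image, Finset.mem_range, pow_zero,
    mul_one]
  constructor
  · rintro ⟨h0, hN⟩
    exact ⟨x.toNat, by omega, by omega⟩
  · rintro ⟨i, hi, rfl⟩
    constructor
    · positivity
    · exact_mod_cast Nat.cast_lt.2 hi

lemma Dk_succ (m M : ℕ) {k : ℕ} (hk : k < m) :
    Dk m M k = Dk m M (k+1)
      ∪ (Finset.range (2^(m-(k+1))*M)).image (fun j : ℕ => (2:ℤ)^k + (j:ℤ)*2^(k+1)) := by
  have hpow : 2^(m-k) = 2 * 2^(m-(k+1)) := by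
    rw [show m-k = (m-(k+1))+1 by omega, pow_succ]
    ring
  obtain ⟨P, hP⟩ : ∃ P, 2^(m-(k+1))*M = P := ⟨_, rfl⟩
  have h2 : 2^(m-k)*M = 2*P := by rw [hpow, mul_assoc, hP]
  ext x
  simp only [Dk, Finset.mem_union, Finset.mem_image, Finset.mem_range]
  rw [hP, h2]
  constructor
  · rintro ⟨i, hi, rfl⟩
    rcases Nat.even_or_odd i with ⟨q, hq⟩ | ⟨q, hq⟩
    · left
      refine ⟨q, by omega, ?_⟩
      subst hq
      push_cast [pow_succ]
      ring
    · right
      refine ⟨q, by omega, ?_⟩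
      subst hq
      push_cast [pow_succ]
      ring
  · rintro (⟨i, hi, rfl⟩ | ⟨j, hj, rfl⟩)
    · refine ⟨2*i, by omega, ?_⟩
      push_cast [pow_succ]
      ring
    · refine ⟨2*j+1, by omega, ?_⟩
      push_cast [pow_succ]
      ring

lemma Dk_top (m M : ℕ) : Dk m M m = (Finset.range M).image (fun i : ℕ => (i:ℤ) * 2^m) := by
  rw [Dk, Nat.sub_self, pow_zero, one_mul]

variable {𝒜 : Type*} [Fintype 𝒜] [MeasurableSpace 𝒜] [MeasurableSingletonClass 𝒜]
  (μ : MeasureTheory.Measure (ℤ → 𝒜)) [MeasureTheory.IsProbabilityMeasure μ]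

lemma decomposition (m M : ℕ) :
    entS1 μ (Finset.Ico (0:ℤ) ((2^m*M : ℕ) : ℤ))
      = (∑ i ∈ Finset.range M, condEnt1 μ {(i:ℤ)*2^m}
          ((Finset.range i).image (fun i' : ℕ => (i':ℤ)*2^m)))
      + ∑ j ∈ Finset.range m, ∑ l ∈ Finset.range (2^(m-(j+1))*M),
          condEnt1 μ {(2:ℤ)^j + (l:ℤ)*2^(j+1)}
            (Dk m M (j+1) ∪ (Finset.range l).image (fun l' : ℕ => (2:ℤ)^j + (l':ℤ)*2^(j+1))) := by
  classical
  rw [Dk_zero]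
  have htop : entS1 μ (Dk m M m)
      = ∑ i ∈ Finset.range M, condEnt1 μ {(i:ℤ)*2^m}
          ((Finset.range i).image (fun i' : ℕ => (i':ℤ)*2^m)) := by
    have := telescope μ (∅ : Finset ℤ) (fun i : ℕ => (i:ℤ)*2^m) M
    rw [Finset.empty_union, entS_empty, ← Dk_top] at this
    rw [this, zero_add]
    refine Finset.sum_congr rfl fun i _ => ?_
    rw [Finset.empty_union]
  have hlev : ∀ j < m, entS1 μ (Dk m M j) - entS1 μ (Dk m M (j+1))
      = ∑ l ∈ Finset.range (2^(m-(j+1))*M),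
          condEnt1 μ {(2:ℤ)^j + (l:ℤ)*2^(j+1)}
            (Dk m M (j+1) ∪ (Finset.range l).image
              (fun l' : ℕ => (2:ℤ)^j + (l':ℤ)*2^(j+1))) := by
    intro j hj
    have := telescope μ (Dk m M (j+1)) (fun l : ℕ => (2:ℤ)^j + (l:ℤ)*2^(j+1))
      (2^(m-(j+1))*M)
    rw [← Dk_succ m M hj] at this
    rw [this]
    ring
  have htel : ∑ j ∈ Finset.range m, (entS1 μ (Dk m M j) - entS1 μ (Dk m M (j+1)))
      = entS1 μ (Dk m M 0) - entS1 μ (Dk m M m) :=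
    Finset.sum_range_sub' (fun j => entS1 μ (Dk m M j)) m
  rw [Finset.sum_congr rfl (fun j hj => hlev j (Finset.mem_range.1 hj))] at htel
  linarith [htel, htop]

end Part6

section Part7
set_option linter.unusedSectionVars false

lemma mem_interBox {Λ' : Set ℤ} {n : ℕ} {x : ℤ} :
    x ∈ interBox1 Λ' n ↔ (-(n:ℤ) ≤ x ∧ x ≤ n) ∧ x ∈ Λ' := by
  classical
  simp [interBox1, Finset.mem_filter, Finset.mem_Icc, and_assoc]

lemma interBox_mono (Λ' : Set ℤ) {n n' : ℕ} (h : n ≤ n') :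
    interBox1 Λ' n ⊆ interBox1 Λ' n' := by
  intro x hx
  rw [mem_interBox] at hx ⊢
  have : ((n:ℤ)) ≤ (n':ℤ) := by exact_mod_cast h
  exact ⟨⟨by linarith [hx.1.1], by linarith [hx.1.2]⟩, hx.2⟩

/-- the set `G_m^-` -/
def GmS (m : ℕ) : Set ℤ := {x : ℤ | ∃ j : ℤ, j < 0 ∧ x = j * 2 ^ m}

/-- the set `(2^j + G_{j+1}^-) ∪ G_{j+1}` -/
def HsS (j : ℕ) : Set ℤ :=
  {x : ℤ | ∃ jj : ℤ, jj < 0 ∧ x = 2 ^ j + jj * 2 ^ (j + 1)}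
    ∪ {x : ℤ | ∃ jj : ℤ, x = jj * 2 ^ (j + 1)}

lemma zero_not_mem_GmS (m : ℕ) : (0:ℤ) ∉ GmS m := by
  rintro ⟨j, hj, hx⟩
  have h2 : (0:ℤ) < 2^m := by positivity
  nlinarith

lemma pow_not_mem_HsS (j : ℕ) : (2:ℤ)^j ∉ HsS j := by
  have hA : (0:ℤ) < 2^j := by positivity
  have hs : (2:ℤ)^(j+1) = 2*2^j := by rw [pow_succ]; ring
  rintro (⟨jj, hjj, hx⟩ | ⟨jj, hx⟩)
  · rw [hs] at hx
    nlinarith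
  · rw [hs] at hx
    have h1 : ((1:ℤ) - 2*jj)*2^j = 0 := by linarith [hx]
    rcases mul_eq_zero.1 h1 with h | h
    · omega
    · exact absurd h (ne_of_gt hA)

lemma int_lb_of_mul {t n c : ℤ} (hc : 1 ≤ c) (ht : t < 0) (h : -n ≤ t * c) : -n ≤ t := by
  nlinarith [mul_nonpos_of_nonpos_of_nonneg ht.le (sub_nonneg.2 hc)]

lemma int_abs_le_of_mul {t n c : ℤ} (hc : 1 ≤ c) (h1 : -n ≤ t*c) (h2 : t*c ≤ n) :
    -n ≤ t ∧ t ≤ n := by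
  rcases le_or_gt 0 t with ht | ht
  · constructor
    · nlinarith
    · nlinarith [mul_nonneg ht (sub_nonneg.2 hc)]
  · constructor
    · exact int_lb_of_mul hc ht h1
    · nlinarith

lemma int_offset_lb {t n : ℤ} {j : ℕ} (hn : 0 ≤ n) (ht : t < 0)
    (h : -n ≤ 2^j + t * 2^(j+1)) : -n ≤ t := by
  have hA : (0:ℤ) < 2^j := by positivity
  have hA1 : (1:ℤ) ≤ 2^j := hA
  have hs : (2:ℤ)^(j+1) = 2*2^j := by rw [pow_succ]; ring
  rw [hs] at h
  by_contra hcon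
  push_neg at hcon
  have h1 : t ≤ -n - 1 := by omega
  have h2 : t*(2*2^j) ≤ (-n-1)*(2*2^j) :=
    mul_le_mul_of_nonneg_right h1 (by positivity)
  nlinarith [mul_nonneg hn (sub_nonneg.2 hA1)]

end Part7

section Part8
set_option linter.unusedSectionVars false

variable {𝒜 : Type*} [Fintype 𝒜] [MeasurableSpace 𝒜] [MeasurableSingletonClass 𝒜]
  (μ : MeasureTheory.Measure (ℤ → 𝒜)) [MeasureTheory.IsProbabilityMeasure μ]

/-- translate the top-level chain term to the origin -/
lemma top_term_translate (hinv : TransInv1 μ) (m i : ℕ) :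
    condEnt1 μ {(i:ℤ)*2^m} ((Finset.range i).image (fun i' : ℕ => (i':ℤ)*2^m))
      = condEnt1 μ {(0:ℤ)}
          ((Finset.range i).image (fun i' : ℕ => ((i':ℤ) - i)*2^m)) := by
  classical
  have h := condEnt_image μ hinv ((i:ℤ)*2^m) {(0:ℤ)}
    ((Finset.range i).image (fun i' : ℕ => ((i':ℤ) - i)*2^m))
  have h1 : ({(0:ℤ)} : Finset ℤ).image (· + (i:ℤ)*2^m) = {(i:ℤ)*2^m} := by
    rw [Finset.image_singleton, zero_add]
  have h2 : ((Finset.range i).image (fun i' : ℕ => ((i':ℤ) - i)*2^m)).image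
      (· + (i:ℤ)*2^m) = (Finset.range i).image (fun i' : ℕ => (i':ℤ)*2^m) := by
    rw [Finset.image_image]
    refine Finset.image_congr fun i' _ => ?_
    show ((i':ℤ) - i)*2^m + (i:ℤ)*2^m = (i':ℤ)*2^m
    ring
  rw [h1, h2] at h
  exact h

lemma top_term_le (hinv : TransInv1 μ) (m i n : ℕ) (hni : n ≤ i) :
    condEnt1 μ {(i:ℤ)*2^m} ((Finset.range i).image (fun i' : ℕ => (i':ℤ)*2^m))
      ≤ condEnt1 μ {(0:ℤ)} (interBox1 (GmS m) n) := by
  classical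
  rw [top_term_translate μ hinv m i]
  refine condEnt_anti μ ?_ ?_
  · -- interBox ⊆ shifted set
    intro x hx
    rw [mem_interBox] at hx
    obtain ⟨⟨hlb, hub⟩, j, hj, rfl⟩ := hx
    have hc : (1:ℤ) ≤ 2^m := by exact_mod_cast Nat.one_le_two_pow
    have hjn : -(n:ℤ) ≤ j := int_lb_of_mul hc hj hlb
    rw [Finset.mem_image]
    refine ⟨(j + i).toNat, Finset.mem_range.2 (by omega), ?_⟩
    have : (((j + i).toNat : ℤ) - i) = j := by omega
    rw [this]
  · -- 0 not in shifted set
    intro v hv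
    rw [Finset.mem_singleton] at hv
    subst hv
    rw [Finset.mem_image]
    rintro ⟨i', hi', hval⟩
    rw [Finset.mem_range] at hi'
    have h2 : (2:ℤ)^m ≠ 0 := by positivity
    rcases mul_eq_zero.1 hval with h | h
    · have : (i':ℤ) = i := by linarith
      omega
    · exact h2 h

lemma top_term_ge (hinv : TransInv1 μ) (m i : ℕ) :
    condEnt1 μ {(0:ℤ)} (interBox1 (GmS m) (i*2^m))
      ≤ condEnt1 μ {(i:ℤ)*2^m} ((Finset.range i).image (fun i' : ℕ => (i':ℤ)*2^m)) := by
  classical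
  rw [top_term_translate μ hinv m i]
  refine condEnt_anti μ ?_ ?_
  · -- shifted set ⊆ interBox
    intro x hx
    rw [Finset.mem_image] at hx
    obtain ⟨i', hi', rfl⟩ := hx
    rw [Finset.mem_range] at hi'
    rw [mem_interBox]
    have hpow : (0:ℤ) < 2^m := by positivity
    have hcast : (((i*2^m : ℕ)) : ℤ) = (i:ℤ)*2^m := by push_cast; ring
    constructor
    · rw [hcast]
      constructor
      · have h1 : -(i:ℤ) ≤ (i':ℤ) - i := by
          have : (0:ℤ) ≤ (i':ℤ) := by positivity
          linarith
        nlinarith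
      · have h1 : ((i':ℤ) - i) ≤ 0 := by
          have : (i':ℤ) ≤ (i:ℤ) := by exact_mod_cast hi'.le
          linarith
        nlinarith
    · exact ⟨(i':ℤ) - i, by
        have : (i':ℤ) < (i:ℤ) := by exact_mod_cast hi'
        linarith, rfl⟩
  · -- 0 not in interBox
    intro v hv
    rw [Finset.mem_singleton] at hv
    subst hv
    intro hmem
    exact zero_not_mem_GmS m (mem_interBox.1 hmem).2

end Part8

section Part9
set_option linter.unusedSectionVars false

variable {𝒜 : Type*} [Fintype 𝒜] [MeasurableSpace 𝒜] [MeasurableSingletonClass 𝒜]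
  (μ : MeasureTheory.Measure (ℤ → 𝒜)) [MeasureTheory.IsProbabilityMeasure μ]

lemma lev_term_translate (hinv : TransInv1 μ) (m M j l : ℕ) :
    condEnt1 μ {(2:ℤ)^j + (l:ℤ)*2^(j+1)}
        (Dk m M (j+1) ∪ (Finset.range l).image (fun l' : ℕ => (2:ℤ)^j + (l':ℤ)*2^(j+1)))
      = condEnt1 μ {(2:ℤ)^j}
          ((Finset.range (2^(m-(j+1))*M)).image (fun i : ℕ => ((i:ℤ) - l)*2^(j+1))
            ∪ (Finset.range l).image (fun l' : ℕ => (2:ℤ)^j + ((l':ℤ) - l)*2^(j+1))) := by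
  classical
  have h := condEnt_image μ hinv ((l:ℤ)*2^(j+1)) {(2:ℤ)^j}
    ((Finset.range (2^(m-(j+1))*M)).image (fun i : ℕ => ((i:ℤ) - l)*2^(j+1))
      ∪ (Finset.range l).image (fun l' : ℕ => (2:ℤ)^j + ((l':ℤ) - l)*2^(j+1)))
  have h1 : ({(2:ℤ)^j} : Finset ℤ).image (· + (l:ℤ)*2^(j+1)) = {(2:ℤ)^j + (l:ℤ)*2^(j+1)} :=
    Finset.image_singleton _ _
  have h2 : (((Finset.range (2^(m-(j+1))*M)).image (fun i : ℕ => ((i:ℤ) - l)*2^(j+1))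
      ∪ (Finset.range l).image (fun l' : ℕ => (2:ℤ)^j + ((l':ℤ) - l)*2^(j+1)))).image
        (· + (l:ℤ)*2^(j+1))
      = Dk m M (j+1) ∪ (Finset.range l).image (fun l' : ℕ => (2:ℤ)^j + (l':ℤ)*2^(j+1)) := by
    rw [Finset.image_union, Finset.image_image, Finset.image_image]
    congr 1
    · rw [Dk]
      refine Finset.image_congr fun i _ => ?_
      show ((i:ℤ) - l)*2^(j+1) + (l:ℤ)*2^(j+1) = (i:ℤ)*2^(j+1)
      ring
    · refine Finset.image_congr fun l' _ => ?_
      show (2:ℤ)^j + ((l':ℤ) - l)*2^(j+1) + (l:ℤ)*2^(j+1) = (2:ℤ)^j + (l':ℤ)*2^(j+1)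
      ring
  rw [h1, h2] at h
  exact h

lemma lev_term_le (hinv : TransInv1 μ) (m M j l n : ℕ) (hn : n ≤ l)
    (hup : l + n < 2^(m-(j+1))*M) :
    condEnt1 μ {(2:ℤ)^j + (l:ℤ)*2^(j+1)}
        (Dk m M (j+1) ∪ (Finset.range l).image (fun l' : ℕ => (2:ℤ)^j + (l':ℤ)*2^(j+1)))
      ≤ condEnt1 μ {(2:ℤ)^j} (interBox1 (HsS j) n) := by
  classical
  rw [lev_term_translate μ hinv m M j l]
  have hc1 : (1:ℤ) ≤ 2^(j+1) := by exact_mod_cast Nat.one_le_two_pow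
  refine condEnt_anti μ ?_ ?_
  · -- interBox ⊆ shifted conditioning set
    intro x hx
    rw [mem_interBox] at hx
    obtain ⟨⟨hlb, hub⟩, hH⟩ := hx
    rw [Finset.mem_union]
    rcases hH with ⟨jj, hjj, rfl⟩ | ⟨jj, rfl⟩
    · right
      have hjn : -(n:ℤ) ≤ jj := int_offset_lb (by positivity) hjj hlb
      rw [Finset.mem_image]
      refine ⟨(jj + l).toNat, Finset.mem_range.2 (by omega), ?_⟩
      have : (((jj + l).toNat : ℤ) - l) = jj := by omega
      rw [this]
    · left
      obtain ⟨h1, h2⟩ := int_abs_le_of_mul hc1 hlb hub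
      rw [Finset.mem_image]
      refine ⟨(jj + l).toNat, Finset.mem_range.2 (by omega), ?_⟩
      have : (((jj + l).toNat : ℤ) - l) = jj := by omega
      rw [this]
  · -- site not in shifted conditioning set
    intro v hv
    rw [Finset.mem_singleton] at hv
    subst hv
    rw [Finset.mem_union]
    have hA : (0:ℤ) < 2^j := by positivity
    have hs : (2:ℤ)^(j+1) = 2*2^j := by rw [pow_succ]; ring
    rintro (h | h)
    · rw [Finset.mem_image] at h
      obtain ⟨i, _, hval⟩ := h
      rw [hs] at hval
      have h1 : ((1:ℤ) - 2*((i:ℤ) - l))*2^j = 0 := by linarith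
      rcases mul_eq_zero.1 h1 with h' | h'
      · omega
      · exact absurd h' (ne_of_gt hA)
    · rw [Finset.mem_image] at h
      obtain ⟨l', hl', hval⟩ := h
      rw [Finset.mem_range] at hl'
      have h1 : ((l':ℤ) - l)*2^(j+1) = 0 := by linarith
      rcases mul_eq_zero.1 h1 with h' | h'
      · omega
      · exact absurd h' (by positivity)

lemma lev_term_ge (hinv : TransInv1 μ) (m M j l : ℕ) (hj : j < m)
    (hl : l < 2^(m-(j+1))*M) :
    condEnt1 μ {(2:ℤ)^j} (interBox1 (HsS j) (2^m*M))
      ≤ condEnt1 μ {(2:ℤ)^j + (l:ℤ)*2^(j+1)}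
          (Dk m M (j+1) ∪ (Finset.range l).image (fun l' : ℕ => (2:ℤ)^j + (l':ℤ)*2^(j+1))) := by
  classical
  rw [lev_term_translate μ hinv m M j l]
  have hM : 1 ≤ M := by
    rcases Nat.eq_zero_or_pos M with h | h
    · rw [h, mul_zero] at hl; omega
    · exact h
  have hBN : ((2^(m-(j+1))*M : ℕ) : ℤ) * 2^(j+1) = ((2^m*M : ℕ) : ℤ) := by
    push_cast
    rw [mul_right_comm, ← pow_add]
    congr 2
    omega
  have hcast : ((2^m*M : ℕ) : ℤ) = (2:ℤ)^m * M := by push_cast; ring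
  have hpos : (0:ℤ) < 2^(j+1) := by positivity
  have hBl : (l:ℤ) * 2^(j+1) ≤ ((2^m*M : ℕ) : ℤ) := by
    rw [← hBN]
    refine mul_le_mul_of_nonneg_right ?_ hpos.le
    exact_mod_cast hl.le
  refine condEnt_anti μ ?_ ?_
  · -- shifted conditioning set ⊆ interBox
    intro x hx
    rw [Finset.mem_union] at hx
    rw [mem_interBox]
    rcases hx with h | h
    · rw [Finset.mem_image] at h
      obtain ⟨i, hi, rfl⟩ := h
      rw [Finset.mem_range] at hi
      have hiB : (i:ℤ) * 2^(j+1) ≤ ((2^m*M : ℕ) : ℤ) := by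
        rw [← hBN]
        refine mul_le_mul_of_nonneg_right ?_ hpos.le
        exact_mod_cast hi.le
      have hinn : ((i:ℤ) - l)*2^(j+1) = (i:ℤ)*2^(j+1) - (l:ℤ)*2^(j+1) := by ring
      refine ⟨⟨?_, ?_⟩, Or.inr ⟨(i:ℤ) - l, rfl⟩⟩
      · rw [hinn]
        have : (0:ℤ) ≤ (i:ℤ)*2^(j+1) := by positivity
        linarith
      · rw [hinn]
        have : (0:ℤ) ≤ (l:ℤ)*2^(j+1) := by positivity
        linarith
    · rw [Finset.mem_image] at h
      obtain ⟨l', hl', rfl⟩ := h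
      rw [Finset.mem_range] at hl'
      have hA : (0:ℤ) < 2^j := by positivity
      have hjm : (2:ℤ)^j ≤ 2^m := pow_le_pow_right₀ (by norm_num) hj.le
      have hmM : (2:ℤ)^m ≤ 2^m * M := by nlinarith [show (1:ℤ) ≤ (M:ℤ) by exact_mod_cast hM]
      have hinn : ((l':ℤ) - l)*2^(j+1) = (l':ℤ)*2^(j+1) - (l:ℤ)*2^(j+1) := by ring
      have hneg : ((l':ℤ) - l)*2^(j+1) ≤ 0 := by
        refine mul_nonpos_of_nonpos_of_nonneg ?_ hpos.le
        have : (l':ℤ) < l := by exact_mod_cast hl'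
        linarith
      refine ⟨⟨?_, ?_⟩, Or.inl ⟨(l':ℤ) - l, by
        have : (l':ℤ) < l := by exact_mod_cast hl'
        constructor
        · linarith
        · rfl⟩⟩
      · rw [hinn]
        have : (0:ℤ) ≤ (l':ℤ)*2^(j+1) := by positivity
        linarith
      · rw [hcast]
        linarith
  · -- site not in interBox
    intro v hv
    rw [Finset.mem_singleton] at hv
    subst hv
    intro hmem
    exact pow_not_mem_HsS j (mem_interBox.1 hmem).2

end Part9

section Part10
set_option linter.unusedSectionVars false

variable {𝒜 : Type*} [Fintype 𝒜] [MeasurableSpace 𝒜] [MeasurableSingletonClass 𝒜]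
  (μ : MeasureTheory.Measure (ℤ → 𝒜)) [MeasureTheory.IsProbabilityMeasure μ]

lemma entS_Ico_subadd (hinv : TransInv1 μ) :
    Subadditive (fun n : ℕ => entS1 μ (Finset.Ico (0:ℤ) (n:ℤ))) := by
  intro a b
  have hsplit : Finset.Ico (0:ℤ) ((a+b : ℕ):ℤ)
      = Finset.Ico (0:ℤ) (a:ℤ) ∪ Finset.Ico (a:ℤ) ((a+b : ℕ):ℤ) := by
    rw [Finset.Ico_union_Ico_eq_Ico (by positivity) (by push_cast; omega)]
  have himg : (Finset.Ico (0:ℤ) (b:ℤ)).image (· + (a:ℤ))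
      = Finset.Ico (a:ℤ) ((a+b : ℕ):ℤ) := by
    rw [Finset.image_add_right_Ico, zero_add]
    congr 1
    push_cast
    ring
  have h2 : entS1 μ (Finset.Ico (a:ℤ) ((a+b : ℕ):ℤ)) = entS1 μ (Finset.Ico (0:ℤ) (b:ℤ)) := by
    rw [← himg, entS_image μ hinv]
  calc entS1 μ (Finset.Ico (0:ℤ) ((a+b : ℕ):ℤ))
      ≤ entS1 μ (Finset.Ico (0:ℤ) (a:ℤ)) + entS1 μ (Finset.Ico (a:ℤ) ((a+b : ℕ):ℤ)) := by
        rw [hsplit]; exact entS_union_le μ _ _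
    _ = _ := by rw [h2]

lemma sum_ite_card_le1 {B n : ℕ} {c : ℝ} (hc : 0 ≤ c) :
    ∑ l ∈ Finset.range B, (if l < n then c else 0) ≤ (n:ℝ) * c := by
  classical
  rw [← Finset.sum_filter, Finset.sum_const, nsmul_eq_mul]
  have c1 : ((Finset.range B).filter (fun l => l < n)).card ≤ n := by
    calc ((Finset.range B).filter (fun l => l < n)).card
        ≤ (Finset.range n).card := Finset.card_le_card (by
          intro x hx
          rw [Finset.mem_filter] at hx
          rw [Finset.mem_range]
          exact hx.2)
      _ = n := Finset.card_range n
  exact mul_le_mul_of_nonneg_right (by exact_mod_cast c1) hc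

lemma sum_ite_card_le2 {B n : ℕ} {c : ℝ} (hc : 0 ≤ c) :
    ∑ l ∈ Finset.range B, (if l < n ∨ B ≤ l + n then c else 0) ≤ ((2*n : ℕ):ℝ) * c := by
  classical
  have hle : ∀ l ∈ Finset.range B, (if l < n ∨ B ≤ l + n then c else 0)
      ≤ (if l < n then c else 0) + (if B ≤ l + n then c else 0) := by
    intro l _
    by_cases h1 : l < n <;> by_cases h2 : B ≤ l + n <;> simp [h1, h2, hc]
  have e2 : ∑ l ∈ Finset.range B, (if B ≤ l + n then c else 0) ≤ (n:ℝ) * c := by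
    rw [← Finset.sum_filter, Finset.sum_const, nsmul_eq_mul]
    have c2 : ((Finset.range B).filter (fun l => B ≤ l + n)).card ≤ n := by
      calc ((Finset.range B).filter (fun l => B ≤ l + n)).card
          ≤ (Finset.Ico (B-n) B).card := Finset.card_le_card (by
            intro x hx
            rw [Finset.mem_filter, Finset.mem_range] at hx
            rw [Finset.mem_Ico]
            omega)
        _ ≤ n := by rw [Nat.card_Ico]; omega
    exact mul_le_mul_of_nonneg_right (by exact_mod_cast c2) hc
  calc ∑ l ∈ Finset.range B, (if l < n ∨ B ≤ l + n then c else 0)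
      ≤ ∑ l ∈ Finset.range B, ((if l < n then c else 0) + (if B ≤ l + n then c else 0)) :=
        Finset.sum_le_sum hle
    _ = (∑ l ∈ Finset.range B, (if l < n then c else 0))
        + ∑ l ∈ Finset.range B, (if B ≤ l + n then c else 0) := Finset.sum_add_distrib
    _ ≤ (n : ℝ) * c + (n : ℝ) * c := add_le_add (sum_ite_card_le1 hc) e2
    _ = ((2*n : ℕ):ℝ) * c := by push_cast; ring

end Part10


/-- hierarchical decomposition. For a translation invariant probability
measure `μ` on `𝒜^ℤ` and `m ≥ 1`, with `G_k = 2^k ℤ` and `G_k^- = {j·2^k : j < 0}`, the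
entropy density `s_μ = lim_n S({0,…,n−1})/n` exists and
`s_μ = (1/2^m)·S({0} | G_m^-) + Σ_{k=1}^m (1/2^k)·S({2^{k−1}} | ({2^{k−1}} + G_k^-) ∪ G_k)`,
where conditional entropies with infinite conditioning sets are limits over growing finite
windows. -/
theorem entropy_density_hierarchical {𝒜 : Type*} [Fintype 𝒜] [Nonempty 𝒜]
    [MeasurableSpace 𝒜] [MeasurableSingletonClass 𝒜]
    (μ : Measure (ℤ → 𝒜)) [IsProbabilityMeasure μ] (hinv : TransInv1 μ)
    (m : ℕ) (hm : 1 ≤ m) :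
    ∃ (s L : ℝ) (c : ℕ → ℝ),
      Filter.Tendsto (fun n : ℕ => entS1 μ (Finset.Ico (0 : ℤ) (n : ℤ)) / (n : ℝ))
        Filter.atTop (nhds s) ∧
      Filter.Tendsto
        (fun n : ℕ => condEnt1 μ {0}
          (interBox1 {x : ℤ | ∃ j : ℤ, j < 0 ∧ x = j * 2 ^ m} n))
        Filter.atTop (nhds L) ∧
      (∀ k, 1 ≤ k → k ≤ m →
        Filter.Tendsto
          (fun n : ℕ => condEnt1 μ {(2 : ℤ) ^ (k - 1)}
            (interBox1
              ({x : ℤ | ∃ j : ℤ, j < 0 ∧ x = 2 ^ (k - 1) + j * 2 ^ k} ∪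
                {x : ℤ | ∃ j : ℤ, x = j * 2 ^ k}) n))
          Filter.atTop (nhds (c k))) ∧
      s = (1 / 2 ^ m) * L + ∑ k ∈ Finset.Icc 1 m, (1 / 2 ^ k : ℝ) * c k := by
  
  classical
  set u : ℕ → ℝ := fun n => entS1 μ (Finset.Ico (0:ℤ) (n:ℤ)) with hu
  have hsubadd : Subadditive u := entS_Ico_subadd μ hinv
  have hbdd : BddBelow (Set.range fun n : ℕ => u n / n) := by
    refine ⟨0, ?_⟩
    rintro x ⟨n, rfl⟩
    exact div_nonneg (entS_nonneg μ _) (Nat.cast_nonneg n)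
  have hstend : Filter.Tendsto (fun n : ℕ => u n / n) Filter.atTop (nhds hsubadd.lim) :=
    hsubadd.tendsto_lim hbdd
  -- L sequence
  set lSeq : ℕ → ℝ := fun n => condEnt1 μ {(0:ℤ)} (interBox1 (GmS m) n) with hlSeq
  have hlanti : Antitone lSeq := by
    intro n n' h
    refine condEnt_anti μ (interBox_mono _ h) ?_
    intro v hv
    rw [Finset.mem_singleton] at hv
    subst hv
    intro hmem
    exact zero_not_mem_GmS m (mem_interBox.1 hmem).2
  have hlbdd : BddBelow (Set.range lSeq) :=
    ⟨0, by rintro x ⟨n, rfl⟩; exact condEnt_nonneg μ _ _⟩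
  set L : ℝ := ⨅ n, lSeq n with hLdef
  have hltend : Filter.Tendsto lSeq Filter.atTop (nhds L) :=
    tendsto_atTop_ciInf hlanti hlbdd
  have hlinf : ∀ n, L ≤ lSeq n := fun n => ciInf_le hlbdd n
  -- c sequences
  set cSeq : ℕ → ℕ → ℝ := fun j n => condEnt1 μ {(2:ℤ)^j} (interBox1 (HsS j) n) with hcSeq
  have hcanti : ∀ j, Antitone (cSeq j) := by
    intro j n n' h
    refine condEnt_anti μ (interBox_mono _ h) ?_
    intro v hv
    rw [Finset.mem_singleton] at hv
    subst hv
    intro hmem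
    exact pow_not_mem_HsS j (mem_interBox.1 hmem).2
  have hcbdd : ∀ j, BddBelow (Set.range (cSeq j)) :=
    fun j => ⟨0, by rintro x ⟨n, rfl⟩; exact condEnt_nonneg μ _ _⟩
  set cL : ℕ → ℝ := fun j => ⨅ n, cSeq j n with hcLdef
  have hctend : ∀ j, Filter.Tendsto (cSeq j) Filter.atTop (nhds (cL j)) :=
    fun j => tendsto_atTop_ciInf (hcanti j) (hcbdd j)
  have hcinf : ∀ j n, cL j ≤ cSeq j n := fun j n => ciInf_le (hcbdd j) n
  -- target value
  set R : ℝ := (1/2^m) * L + ∑ j ∈ Finset.range m, (1/2^(j+1) : ℝ) * cL j with hRdef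
  -- auxiliary quantities
  set logK : ℝ := Real.log (Fintype.card 𝒜) with hlogK
  have hlogK0 : 0 ≤ logK := Real.log_nonneg (by exact_mod_cast Fintype.card_pos)
  have hincr : Filter.Tendsto (fun M : ℕ => 2^m*M) Filter.atTop Filter.atTop :=
    Filter.tendsto_atTop_mono (fun M => Nat.le_mul_of_pos_left M (Nat.two_pow_pos m))
      Filter.tendsto_id
  have hsubseq : Filter.Tendsto (fun M : ℕ => u (2^m*M) / ((2^m*M : ℕ):ℝ))
      Filter.atTop (nhds hsubadd.lim) := hstend.comp hincr
  have hNpos : ∀ M : ℕ, 1 ≤ M → (0:ℝ) < ((2^m*M : ℕ):ℝ) := by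
    intro M hM
    exact_mod_cast Nat.mul_pos (Nat.two_pow_pos m) hM
  -- multiplication identity
  have hmulR : ∀ (M : ℕ) (x : ℝ) (y : ℕ → ℝ),
      ((1/2^m)*x + ∑ j ∈ Finset.range m, (1/2^(j+1):ℝ)*y j) * ((2^m*M:ℕ):ℝ)
        = (M:ℝ)*x + ∑ j ∈ Finset.range m, ((2^(m-(j+1))*M:ℕ):ℝ)*y j := by
    intro M x y
    have h2m : ((2:ℝ))^m ≠ 0 := by positivity
    rw [add_mul, Finset.sum_mul]
    congr 1
    · have e : ((2^m*M : ℕ):ℝ) = (2:ℝ)^m * M := by push_cast; ring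
      rw [e]
      field_simp
    · refine Finset.sum_congr rfl fun j hj => ?_
      rw [Finset.mem_range] at hj
      have hsplitp : (2:ℝ)^m = 2^(m-(j+1)) * 2^(j+1) := by
        rw [← pow_add]
        congr 1
        omega
      have e1 : ((2^(m-(j+1))*M : ℕ):ℝ) = (2:ℝ)^(m-(j+1)) * M := by push_cast; ring
      have e2 : ((2^m*M : ℕ):ℝ) = (2:ℝ)^(m-(j+1)) * 2^(j+1) * M := by
        push_cast
        rw [hsplitp]
      rw [e1, e2]
      have hp2 : (2:ℝ)^(j+1) ≠ 0 := by positivity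
      field_simp
  -- lower bound
  have hlow : ∀ M : ℕ, (M:ℝ)*L + ∑ j ∈ Finset.range m, ((2^(m-(j+1))*M:ℕ):ℝ)*cL j
      ≤ u (2^m*M) := by
    intro M
    have hdec := decomposition μ m M
    have htop : (M:ℝ)*L ≤ ∑ i ∈ Finset.range M, condEnt1 μ {(i:ℤ)*2^m}
        ((Finset.range i).image (fun i' : ℕ => (i':ℤ)*2^m)) := by
      calc (M:ℝ)*L = ∑ _i ∈ Finset.range M, L := by
            rw [Finset.sum_const, Finset.card_range, nsmul_eq_mul]
        _ ≤ _ := by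
            refine Finset.sum_le_sum fun i _ => ?_
            exact le_trans (hlinf (i*2^m)) (top_term_ge μ hinv m i)
    have hlev : ∀ j ∈ Finset.range m,
        ((2^(m-(j+1))*M:ℕ):ℝ)*cL j ≤ ∑ l ∈ Finset.range (2^(m-(j+1))*M),
          condEnt1 μ {(2:ℤ)^j + (l:ℤ)*2^(j+1)}
            (Dk m M (j+1) ∪ (Finset.range l).image
              (fun l' : ℕ => (2:ℤ)^j + (l':ℤ)*2^(j+1))) := by
      intro j hj
      rw [Finset.mem_range] at hj
      calc ((2^(m-(j+1))*M:ℕ):ℝ)*cL j = ∑ _l ∈ Finset.range (2^(m-(j+1))*M), cL j := by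
            rw [Finset.sum_const, Finset.card_range, nsmul_eq_mul]
        _ ≤ _ := by
            refine Finset.sum_le_sum fun l hl => ?_
            rw [Finset.mem_range] at hl
            exact le_trans (hcinf j (2^m*M)) (lev_term_ge μ hinv m M j l hj hl)
    calc (M:ℝ)*L + ∑ j ∈ Finset.range m, ((2^(m-(j+1))*M:ℕ):ℝ)*cL j
        ≤ (∑ i ∈ Finset.range M, condEnt1 μ {(i:ℤ)*2^m}
            ((Finset.range i).image (fun i' : ℕ => (i':ℤ)*2^m)))
          + ∑ j ∈ Finset.range m, ∑ l ∈ Finset.range (2^(m-(j+1))*M),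
              condEnt1 μ {(2:ℤ)^j + (l:ℤ)*2^(j+1)}
                (Dk m M (j+1) ∪ (Finset.range l).image
                  (fun l' : ℕ => (2:ℤ)^j + (l':ℤ)*2^(j+1))) :=
          add_le_add htop (Finset.sum_le_sum hlev)
      _ = u (2^m*M) := hdec.symm
  -- upper bound
  have hupp : ∀ (n M : ℕ), u (2^m*M)
      ≤ (M:ℝ)*lSeq n + (∑ j ∈ Finset.range m, ((2^(m-(j+1))*M:ℕ):ℝ)*cSeq j n)
        + ((n + 2*n*m : ℕ):ℝ)*logK := by
    intro n M
    have hdec := decomposition μ m M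
    have htop : ∑ i ∈ Finset.range M, condEnt1 μ {(i:ℤ)*2^m}
        ((Finset.range i).image (fun i' : ℕ => (i':ℤ)*2^m))
          ≤ (M:ℝ)*lSeq n + (n:ℝ)*logK := by
      have hterm : ∀ i ∈ Finset.range M, condEnt1 μ {(i:ℤ)*2^m}
          ((Finset.range i).image (fun i' : ℕ => (i':ℤ)*2^m))
            ≤ lSeq n + (if i < n then logK else 0) := by
        intro i _
        by_cases hin : i < n
        · rw [if_pos hin]
          have h1 := condEnt_le_log μ ((i:ℤ)*2^m)
            ((Finset.range i).image (fun i' : ℕ => (i':ℤ)*2^m))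
          have h2 := condEnt_nonneg μ {(0:ℤ)} (interBox1 (GmS m) n)
          linarith
        · rw [if_neg hin]
          rw [add_zero]
          exact top_term_le μ hinv m i n (by omega)
      calc (∑ i ∈ Finset.range M, condEnt1 μ {(i:ℤ)*2^m}
            ((Finset.range i).image (fun i' : ℕ => (i':ℤ)*2^m)))
          ≤ ∑ i ∈ Finset.range M, (lSeq n + (if i < n then logK else 0)) :=
            Finset.sum_le_sum hterm
        _ = (M:ℝ)*lSeq n + ∑ i ∈ Finset.range M, (if i < n then logK else 0) := by
            rw [Finset.sum_add_distrib, Finset.sum_const, Finset.card_range, nsmul_eq_mul]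
        _ ≤ (M:ℝ)*lSeq n + (n:ℝ)*logK := by
            have := sum_ite_card_le1 (B := M) (n := n) hlogK0
            linarith
    have hlev : ∀ j ∈ Finset.range m,
        ∑ l ∈ Finset.range (2^(m-(j+1))*M),
          condEnt1 μ {(2:ℤ)^j + (l:ℤ)*2^(j+1)}
            (Dk m M (j+1) ∪ (Finset.range l).image
              (fun l' : ℕ => (2:ℤ)^j + (l':ℤ)*2^(j+1)))
          ≤ ((2^(m-(j+1))*M:ℕ):ℝ)*cSeq j n + ((2*n:ℕ):ℝ)*logK := by
      intro j hj
      rw [Finset.mem_range] at hj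
      set B := 2^(m-(j+1))*M with hB
      have hterm : ∀ l ∈ Finset.range B,
          condEnt1 μ {(2:ℤ)^j + (l:ℤ)*2^(j+1)}
            (Dk m M (j+1) ∪ (Finset.range l).image
              (fun l' : ℕ => (2:ℤ)^j + (l':ℤ)*2^(j+1)))
          ≤ cSeq j n + (if l < n ∨ B ≤ l + n then logK else 0) := by
        intro l _
        by_cases hbad : l < n ∨ B ≤ l + n
        · rw [if_pos hbad]
          have h1 := condEnt_le_log μ ((2:ℤ)^j + (l:ℤ)*2^(j+1))
            (Dk m M (j+1) ∪ (Finset.range l).image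
              (fun l' : ℕ => (2:ℤ)^j + (l':ℤ)*2^(j+1)))
          have h2 := condEnt_nonneg μ {(2:ℤ)^j} (interBox1 (HsS j) n)
          linarith
        · push_neg at hbad
          rw [if_neg (by push_neg; exact hbad)]
          rw [add_zero]
          exact lev_term_le μ hinv m M j l n hbad.1 (by omega)
      calc (∑ l ∈ Finset.range B, condEnt1 μ {(2:ℤ)^j + (l:ℤ)*2^(j+1)}
            (Dk m M (j+1) ∪ (Finset.range l).image
              (fun l' : ℕ => (2:ℤ)^j + (l':ℤ)*2^(j+1))))
          ≤ ∑ l ∈ Finset.range B, (cSeq j n + (if l < n ∨ B ≤ l + n then logK else 0)) :=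
            Finset.sum_le_sum hterm
        _ = (B:ℝ)*cSeq j n + ∑ l ∈ Finset.range B, (if l < n ∨ B ≤ l + n then logK else 0) := by
            rw [Finset.sum_add_distrib, Finset.sum_const, Finset.card_range, nsmul_eq_mul]
        _ ≤ ((B:ℕ):ℝ)*cSeq j n + ((2*n:ℕ):ℝ)*logK := by
            have := sum_ite_card_le2 (B := B) (n := n) hlogK0
            linarith
    have hsum2 : ∑ j ∈ Finset.range m, (((2^(m-(j+1))*M:ℕ):ℝ)*cSeq j n + ((2*n:ℕ):ℝ)*logK)
        = (∑ j ∈ Finset.range m, ((2^(m-(j+1))*M:ℕ):ℝ)*cSeq j n)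
          + (m:ℝ)*(((2*n:ℕ):ℝ)*logK) := by
      rw [Finset.sum_add_distrib, Finset.sum_const, Finset.card_range, nsmul_eq_mul]
    have hcastC : ((n + 2*n*m : ℕ):ℝ) = (n:ℝ) + (m:ℝ)*((2*n:ℕ):ℝ) := by push_cast; ring
    calc u (2^m*M)
        = (∑ i ∈ Finset.range M, condEnt1 μ {(i:ℤ)*2^m}
            ((Finset.range i).image (fun i' : ℕ => (i':ℤ)*2^m)))
          + ∑ j ∈ Finset.range m, ∑ l ∈ Finset.range (2^(m-(j+1))*M),
              condEnt1 μ {(2:ℤ)^j + (l:ℤ)*2^(j+1)}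
                (Dk m M (j+1) ∪ (Finset.range l).image
                  (fun l' : ℕ => (2:ℤ)^j + (l':ℤ)*2^(j+1))) := hdec
      _ ≤ ((M:ℝ)*lSeq n + (n:ℝ)*logK)
          + ∑ j ∈ Finset.range m, (((2^(m-(j+1))*M:ℕ):ℝ)*cSeq j n + ((2*n:ℕ):ℝ)*logK) :=
          add_le_add htop (Finset.sum_le_sum hlev)
      _ = (M:ℝ)*lSeq n + (∑ j ∈ Finset.range m, ((2^(m-(j+1))*M:ℕ):ℝ)*cSeq j n)
          + ((n + 2*n*m : ℕ):ℝ)*logK := by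
          rw [hsum2, hcastC]
          ring
  -- conclude : s ≤ R
  have hAle : ∀ n : ℕ, hsubadd.lim
      ≤ (1/2^m)*lSeq n + ∑ j ∈ Finset.range m, (1/2^(j+1):ℝ)*cSeq j n := by
    intro n
    set A : ℝ := (1/2^m)*lSeq n + ∑ j ∈ Finset.range m, (1/2^(j+1):ℝ)*cSeq j n with hA
    set C : ℝ := ((n + 2*n*m : ℕ):ℝ)*logK with hC
    have hNtends : Filter.Tendsto (fun M : ℕ => ((2^m*M:ℕ):ℝ)) Filter.atTop Filter.atTop :=
      (tendsto_natCast_atTop_atTop (R := ℝ)).comp hincr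
    have htendsRHS : Filter.Tendsto (fun M : ℕ => A + C/((2^m*M:ℕ):ℝ))
        Filter.atTop (nhds (A + 0)) :=
      Filter.Tendsto.add tendsto_const_nhds (Filter.Tendsto.div_atTop tendsto_const_nhds hNtends)
    rw [add_zero] at htendsRHS
    refine le_of_tendsto_of_tendsto hsubseq htendsRHS ?_
    filter_upwards [Filter.eventually_ge_atTop 1] with M hM
    have hN := hNpos M hM
    rw [div_le_iff₀ hN]
    have hexp : (A + C/((2^m*M:ℕ):ℝ)) * ((2^m*M:ℕ):ℝ)
        = ((M:ℝ)*lSeq n + ∑ j ∈ Finset.range m, ((2^(m-(j+1))*M:ℕ):ℝ)*cSeq j n) + C := by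
      rw [add_mul, hmulR M (lSeq n) (fun j => cSeq j n), div_mul_cancel₀ _ (ne_of_gt hN)]
    rw [hexp]
    exact hupp n M
  have hAtendsR : Filter.Tendsto
      (fun n : ℕ => (1/2^m)*lSeq n + ∑ j ∈ Finset.range m, (1/2^(j+1):ℝ)*cSeq j n)
      Filter.atTop (nhds R) := by
    rw [hRdef]
    exact Filter.Tendsto.add (hltend.const_mul (1/2^m))
      (tendsto_finset_sum _ (fun j _ => (hctend j).const_mul (1/2^(j+1))))
  have hsleR : hsubadd.lim ≤ R :=
    le_of_tendsto_of_tendsto' tendsto_const_nhds hAtendsR hAle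
  -- conclude : R ≤ s
  have hRles : R ≤ hsubadd.lim := by
    refine ge_of_tendsto hsubseq ?_
    filter_upwards [Filter.eventually_ge_atTop 1] with M hM
    have hN := hNpos M hM
    rw [le_div_iff₀ hN, hRdef]
    rw [hmulR M L cL]
    exact hlow M
  have hsR : hsubadd.lim = R := le_antisymm hsleR hRles
  -- assemble
  refine ⟨hsubadd.lim, L, fun k => cL (k-1), hstend, hltend, ?_, ?_⟩
  · intro k hk1 hkm
    obtain ⟨j, rfl⟩ : ∃ j, k = j + 1 := ⟨k-1, by omega⟩
    exact hctend j
  · show hsubadd.lim = (1/2^m)*L + ∑ k ∈ Finset.Icc 1 m, (1/2^k : ℝ) * cL (k-1)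
    have hIcc : ∑ k ∈ Finset.Icc 1 m, (1/2^k : ℝ) * cL (k-1)
        = ∑ j ∈ Finset.range m, (1/2^(j+1) : ℝ) * cL j := by
      rw [← Finset.Ico_add_one_right_eq_Icc, Finset.sum_Ico_eq_sum_range]
      have hrange : m + 1 - 1 = m := by omega
      rw [hrange]
      refine Finset.sum_congr rfl fun j _ => ?_
      have e1 : 1 + j - 1 = j := by omega
      have e2 : 1 + j = j + 1 := by omega
      rw [e1, e2]
    rw [hIcc, hsR, hRdef]
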